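/- In the controlled discrete route-switching setting, for any fixed threshold s̄ and any policy a, the success probability satisfies P(J_i^a(x) ≤ s̄) ≤ ŵ_i(x, s̄), and the supremum defining ŵ is attained: a policy choosing at state (x, i, accumulated cost c) any action in argmax_{a∈A} Σ_j p_{ij} ŵ_j(F_i(x,a), s̄ − c − K_i(x,a)) achieves P(J_i^a(x) ≤ s̄) = ŵ_i(x, s̄). -/
import Mathlib


open Classical in
/-- Probability that the controlled route-switching process, run under the
feedback policy `pol : (position, mode, accumulated cost) → action`, starting
in mode `i` at node `x` with cost `c` accumulated so far, terminates in `Q`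
within `n` steps with total cumulative cost at most the threshold `s`. -/
noncomputable def reachCtrl {X A : Type*} {M : ℕ} (Q : Set X)
    (F : Fin M → X → A → X) (K : Fin M → X → A → ℝ) (q : Fin M → X → ℝ)
    (p : Fin M → Fin M → ℝ) (pol : X → Fin M → ℝ → A) (s : ℝ) :
    ℕ → Fin M → X → ℝ → ℝ
  | 0, i, x, c => if x ∈ Q ∧ c + q i x ≤ s then 1 else 0
  | n + 1, i, x, c =>
      if x ∈ Q then (if c + q i x ≤ s then 1 else 0)
      else ∑ j, p i j *
        reachCtrl Q F K q p pol s n j (F i x (pol x i c))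
          (c + K i x (pol x i c))

/-- `P(J_i^a(x) ≤ s)`: the probability that the cumulative cost under policy
`pol` does not exceed `s`, as a monotone limit over horizons. -/
noncomputable def polCDF {X A : Type*} {M : ℕ} (Q : Set X)
    (F : Fin M → X → A → X) (K : Fin M → X → A → ℝ) (q : Fin M → X → ℝ)
    (p : Fin M → Fin M → ℝ) (pol : X → Fin M → ℝ → A)
    (i : Fin M) (x : X) (s : ℝ) : ℝ :=
  ⨆ n : ℕ, reachCtrl Q F K q p pol s n i x 0

/-- The threshold-aware value function
`ŵ_i(x,s) = sup over feedback policies of P(J_i^a(x) ≤ s)`. -/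
noncomputable def optCDF {X A : Type*} [Nonempty A] {M : ℕ} (Q : Set X)
    (F : Fin M → X → A → X) (K : Fin M → X → A → ℝ) (q : Fin M → X → ℝ)
    (p : Fin M → Fin M → ℝ) (i : Fin M) (x : X) (s : ℝ) : ℝ :=
  ⨆ pol : X → Fin M → ℝ → A, polCDF Q F K q p pol i x s

section Aux
open Classical
set_option linter.unusedSectionVars false

variable {X A : Type*} [Fintype A] [Nonempty A] {M : ℕ}
variable (Q : Set X) (F : Fin M → X → A → X) (K : Fin M → X → A → ℝ)
  (q : Fin M → X → ℝ) (p : Fin M → Fin M → ℝ)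

/-- Finite-horizon optimal value function. -/
noncomputable def Vopt : ℕ → Fin M → X → ℝ → ℝ
  | 0, i, x, s => if x ∈ Q ∧ q i x ≤ s then 1 else 0
  | n+1, i, x, s =>
      if x ∈ Q then (if q i x ≤ s then 1 else 0)
      else Finset.univ.sup' Finset.univ_nonempty
        (fun a : A => ∑ j, p i j * Vopt n j (F i x a) (s - K i x a))

lemma Vopt_zero (i : Fin M) (x : X) (s : ℝ) :
    Vopt Q F K q p 0 i x s = if x ∈ Q ∧ q i x ≤ s then 1 else 0 := rfl

lemma Vopt_succ (n : ℕ) (i : Fin M) (x : X) (s : ℝ) :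
    Vopt Q F K q p (n+1) i x s =
      if x ∈ Q then (if q i x ≤ s then 1 else 0)
      else Finset.univ.sup' Finset.univ_nonempty
        (fun a : A => ∑ j, p i j * Vopt Q F K q p n j (F i x a) (s - K i x a)) := rfl

lemma Vopt_nonneg (hp0 : ∀ i j, 0 ≤ p i j) :
    ∀ (n : ℕ) (i : Fin M) (x : X) (s : ℝ), 0 ≤ Vopt Q F K q p n i x s := by
  intro n
  induction n with
  | zero => intro i x s; simp only [Vopt]; positivity
  | succ n ih =>
    intro i x s
    simp only [Vopt]
    split
    · positivity
    · refine le_trans ?_ (Finset.le_sup' _ (Finset.mem_univ (Classical.arbitrary A)))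
      exact Finset.sum_nonneg fun j _ => mul_nonneg (hp0 i j) (ih _ _ _)

lemma Vopt_le_one (hp0 : ∀ i j, 0 ≤ p i j) (hp1 : ∀ i, ∑ j, p i j = 1) :
    ∀ (n : ℕ) (i : Fin M) (x : X) (s : ℝ), Vopt Q F K q p n i x s ≤ 1 := by
  intro n
  induction n with
  | zero => intro i x s; simp only [Vopt]; split <;> norm_num
  | succ n ih =>
    intro i x s
    simp only [Vopt]
    split
    · split <;> norm_num
    · refine Finset.sup'_le _ _ fun a _ => ?_
      calc ∑ j, p i j * Vopt Q F K q p n j (F i x a) (s - K i x a)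
          ≤ ∑ j, p i j * 1 :=
            Finset.sum_le_sum fun j _ => mul_le_mul_of_nonneg_left (ih _ _ _) (hp0 i j)
        _ = 1 := by simp [hp1 i]

lemma Vopt_succ_le (hp0 : ∀ i j, 0 ≤ p i j) :
    ∀ (n : ℕ) (i : Fin M) (x : X) (s : ℝ),
      Vopt Q F K q p n i x s ≤ Vopt Q F K q p (n+1) i x s := by
  intro n
  induction n with
  | zero =>
    intro i x s
    by_cases hx : x ∈ Q
    · simp only [Vopt, hx, if_pos, true_and]
      exact le_rfl
    · simp only [Vopt, hx, if_neg, false_and, if_false]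
      refine le_trans ?_ (Finset.le_sup' _ (Finset.mem_univ (Classical.arbitrary A)))
      refine Finset.sum_nonneg fun j _ => mul_nonneg (hp0 i j) ?_
      exact Vopt_nonneg Q F K q p hp0 0 _ _ _
  | succ n ih =>
    intro i x s
    by_cases hx : x ∈ Q
    · simp only [Vopt, hx, if_pos]
      exact le_rfl
    · simp only [Vopt, hx, if_neg, if_false]
      refine Finset.sup'_le _ _ fun a ha => ?_
      refine le_trans ?_ (Finset.le_sup' _ ha)
      exact Finset.sum_le_sum fun j _ => mul_le_mul_of_nonneg_left (ih _ _ _) (hp0 i j)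

lemma Vopt_le_of_le (hp0 : ∀ i j, 0 ≤ p i j) {n m : ℕ} (hnm : n ≤ m)
    (i : Fin M) (x : X) (s : ℝ) :
    Vopt Q F K q p n i x s ≤ Vopt Q F K q p m i x s := by
  induction m, hnm using Nat.le_induction with
  | base => exact le_rfl
  | succ m _ ih => exact le_trans ih (Vopt_succ_le Q F K q p hp0 m i x s)

lemma Vopt_neg {κ : ℝ} (hκ : 0 < κ) (hK : ∀ i x a, κ ≤ K i x a)
    (hq : ∀ i, ∀ x ∈ Q, 0 ≤ q i x) :
    ∀ (n : ℕ) (i : Fin M) (x : X) (s : ℝ), s < 0 → Vopt Q F K q p n i x s = 0 := by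
  intro n
  induction n with
  | zero =>
    intro i x s hs
    have h : ¬(x ∈ Q ∧ q i x ≤ s) := by
      rintro ⟨hx, hqs⟩
      exact absurd (le_trans (hq i x hx) hqs) (not_le.2 hs)
    simp only [Vopt]
    exact if_neg h
  | succ n ih =>
    intro i x s hs
    by_cases hx : x ∈ Q
    · have h : ¬ q i x ≤ s := fun hqs => absurd (le_trans (hq i x hx) hqs) (not_le.2 hs)
      simp only [Vopt, hx, if_pos]
      exact if_neg h
    · simp only [Vopt, hx, if_neg, if_false]
      have : ∀ a : A, (∑ j, p i j * Vopt Q F K q p n j (F i x a) (s - K i x a)) = 0 := by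
        intro a
        refine Finset.sum_eq_zero fun j _ => ?_
        rw [ih _ _ _ (by linarith [hK i x a]), mul_zero]
      calc Finset.univ.sup' Finset.univ_nonempty
            (fun a : A => ∑ j, p i j * Vopt Q F K q p n j (F i x a) (s - K i x a))
          = Finset.univ.sup' Finset.univ_nonempty (fun _ : A => (0:ℝ)) := by
            exact Finset.sup'_congr _ rfl fun a _ => this a
        _ = 0 := Finset.sup'_const _ _

lemma Vopt_const {κ : ℝ} (hκ : 0 < κ) (hK : ∀ i x a, κ ≤ K i x a)
    (hq : ∀ i, ∀ x ∈ Q, 0 ≤ q i x) :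
    ∀ (n : ℕ) (s : ℝ), s < n * κ → ∀ (i : Fin M) (x : X),
      Vopt Q F K q p n i x s = Vopt Q F K q p (n+1) i x s := by
  intro n
  induction n with
  | zero =>
    intro s hs i x
    have hs' : s < 0 := by simpa using hs
    rw [Vopt_neg Q F K q p hκ hK hq 0 i x s hs',
        Vopt_neg Q F K q p hκ hK hq 1 i x s hs']
  | succ n ih =>
    intro s hs i x
    by_cases hx : x ∈ Q
    · rw [Vopt_succ Q F K q p n i x s, Vopt_succ Q F K q p (n+1) i x s,
        if_pos hx, if_pos hx]
    · rw [Vopt_succ Q F K q p n i x s, Vopt_succ Q F K q p (n+1) i x s,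
        if_neg hx, if_neg hx]
      refine Finset.sup'_congr _ rfl fun a _ => ?_
      refine Finset.sum_congr rfl fun j _ => ?_
      rw [ih (s - K i x a) (by push_cast at hs ⊢; nlinarith [hK i x a])]

lemma Vopt_stable {κ : ℝ} (hκ : 0 < κ) (hK : ∀ i x a, κ ≤ K i x a)
    (hq : ∀ i, ∀ x ∈ Q, 0 ≤ q i x) {n m : ℕ} (hnm : n ≤ m) {s : ℝ}
    (hs : s < n * κ) (i : Fin M) (x : X) :
    Vopt Q F K q p n i x s = Vopt Q F K q p m i x s := by
  induction m, hnm using Nat.le_induction with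
  | base => rfl
  | succ m hm ih =>
    rw [ih, Vopt_const Q F K q p hκ hK hq m s ?_ i x]
    calc s < n * κ := hs
      _ ≤ m * κ := by
        have : (n:ℝ) ≤ m := by exact_mod_cast hm
        nlinarith

/-- A horizon large enough for threshold `s`. -/
noncomputable def nBig (κ s : ℝ) : ℕ := ⌈s / κ⌉₊ + 1

lemma lt_nBig_mul {κ : ℝ} (hκ : 0 < κ) (s : ℝ) : s < (nBig κ s : ℝ) * κ := by
  have h1 : s / κ ≤ (⌈s / κ⌉₊ : ℝ) := Nat.le_ceil _
  have h2 : (⌈s / κ⌉₊ : ℝ) < (nBig κ s : ℝ) := by simp [nBig]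
  have := (div_le_iff₀ hκ).1 h1
  nlinarith

/-- The infinite-horizon optimal value function. -/
noncomputable def Wlim (κ : ℝ) (i : Fin M) (x : X) (s : ℝ) : ℝ :=
  Vopt Q F K q p (nBig κ s) i x s

lemma Vopt_eq_Wlim {κ : ℝ} (hκ : 0 < κ) (hK : ∀ i x a, κ ≤ K i x a)
    (hq : ∀ i, ∀ x ∈ Q, 0 ≤ q i x) {n : ℕ} {s : ℝ} (hs : s < n * κ)
    (i : Fin M) (x : X) :
    Vopt Q F K q p n i x s = Wlim Q F K q p κ i x s := by
  rcases le_total n (nBig κ s) with h | h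
  · exact Vopt_stable Q F K q p hκ hK hq h hs i x
  · exact (Vopt_stable Q F K q p hκ hK hq h (lt_nBig_mul hκ s) i x).symm

lemma Vopt_le_Wlim {κ : ℝ} (hκ : 0 < κ) (hK : ∀ i x a, κ ≤ K i x a)
    (hq : ∀ i, ∀ x ∈ Q, 0 ≤ q i x) (hp0 : ∀ i j, 0 ≤ p i j)
    (n : ℕ) (s : ℝ) (i : Fin M) (x : X) :
    Vopt Q F K q p n i x s ≤ Wlim Q F K q p κ i x s := by
  rcases le_total n (nBig κ s) with h | h
  · exact Vopt_le_of_le Q F K q p hp0 h i x s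
  · have hcast : ((nBig κ s : ℕ) : ℝ) ≤ (n : ℝ) := by exact_mod_cast h
    have hlt : s < (n : ℝ) * κ :=
      lt_of_lt_of_le (lt_nBig_mul hκ s) (mul_le_mul_of_nonneg_right hcast hκ.le)
    rw [Vopt_eq_Wlim Q F K q p hκ hK hq hlt i x]

lemma Wlim_nonneg {κ : ℝ} (hp0 : ∀ i j, 0 ≤ p i j) (i : Fin M) (x : X) (s : ℝ) :
    0 ≤ Wlim Q F K q p κ i x s := Vopt_nonneg Q F K q p hp0 _ i x s

lemma Wlim_neg {κ : ℝ} (hκ : 0 < κ) (hK : ∀ i x a, κ ≤ K i x a)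
    (hq : ∀ i, ∀ x ∈ Q, 0 ≤ q i x) {s : ℝ} (hs : s < 0) (i : Fin M) (x : X) :
    Wlim Q F K q p κ i x s = 0 := Vopt_neg Q F K q p hκ hK hq _ i x s hs

lemma Wlim_mem {κ : ℝ} {x : X} (hx : x ∈ Q) (i : Fin M) (s : ℝ) :
    Wlim Q F K q p κ i x s = if q i x ≤ s then 1 else 0 := by
  show Vopt Q F K q p (⌈s / κ⌉₊ + 1) i x s = _
  simp only [Vopt, hx, if_pos]

lemma Wlim_not_mem {κ : ℝ} (hκ : 0 < κ) (hK : ∀ i x a, κ ≤ K i x a)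
    (hq : ∀ i, ∀ x ∈ Q, 0 ≤ q i x) {x : X} (hx : x ∉ Q) (i : Fin M) (s : ℝ) :
    Wlim Q F K q p κ i x s = Finset.univ.sup' Finset.univ_nonempty
      (fun a : A => ∑ j, p i j * Wlim Q F K q p κ j (F i x a) (s - K i x a)) := by
  have hb : s < ((nBig κ s + 1 : ℕ) : ℝ) * κ := by
    have := lt_nBig_mul hκ s
    push_cast
    nlinarith
  rw [← Vopt_eq_Wlim Q F K q p hκ hK hq hb i x,
    Vopt_succ Q F K q p (nBig κ s) i x s, if_neg hx]
  refine Finset.sup'_congr _ rfl fun a _ => Finset.sum_congr rfl fun j _ => ?_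
  rw [Vopt_eq_Wlim Q F K q p hκ hK hq (s := s - K i x a)
    (by have := lt_nBig_mul hκ s; have := hK i x a; nlinarith) j (F i x a)]

lemma reachCtrl_zero (pol : X → Fin M → ℝ → A) (s : ℝ) (i : Fin M) (x : X) (c : ℝ) :
    reachCtrl Q F K q p pol s 0 i x c = if x ∈ Q ∧ c + q i x ≤ s then 1 else 0 := rfl

lemma reachCtrl_succ (pol : X → Fin M → ℝ → A) (s : ℝ) (n : ℕ) (i : Fin M) (x : X) (c : ℝ) :
    reachCtrl Q F K q p pol s (n+1) i x c =
      if x ∈ Q then (if c + q i x ≤ s then 1 else 0)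
      else ∑ j, p i j *
        reachCtrl Q F K q p pol s n j (F i x (pol x i c))
          (c + K i x (pol x i c)) := rfl

lemma reachCtrl_le_Vopt (hp0 : ∀ i j, 0 ≤ p i j) (pol : X → Fin M → ℝ → A) (s : ℝ) :
    ∀ (n : ℕ) (i : Fin M) (x : X) (c : ℝ),
      reachCtrl Q F K q p pol s n i x c ≤ Vopt Q F K q p n i x (s - c) := by
  intro n
  induction n with
  | zero =>
    intro i x c
    rw [reachCtrl_zero, Vopt_zero]
    have h : c + q i x ≤ s ↔ q i x ≤ s - c := le_sub_iff_add_le'.symm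
    exact le_of_eq (if_congr (and_congr_right fun _ => h) rfl rfl)
  | succ n ih =>
    intro i x c
    rw [reachCtrl_succ, Vopt_succ]
    by_cases hx : x ∈ Q
    · rw [if_pos hx, if_pos hx]
      have h : c + q i x ≤ s ↔ q i x ≤ s - c := le_sub_iff_add_le'.symm
      exact le_of_eq (if_congr h rfl rfl)
    · rw [if_neg hx, if_neg hx]
      set a := pol x i c with ha
      refine le_trans ?_ (Finset.le_sup' _ (Finset.mem_univ a))
      refine Finset.sum_le_sum fun j _ => mul_le_mul_of_nonneg_left ?_ (hp0 i j)
      have := ih j (F i x a) (c + K i x a)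
      rwa [show s - (c + K i x a) = s - c - K i x a by ring] at this

lemma greedy_reach {κ : ℝ} (hκ : 0 < κ) (hK : ∀ i x a, κ ≤ K i x a)
    (hq : ∀ i, ∀ x ∈ Q, 0 ≤ q i x) (hp0 : ∀ i j, 0 ≤ p i j)
    {sbar : ℝ} {pol : X → Fin M → ℝ → A}
    (Hg : ∀ (x : X) (i : Fin M) (c : ℝ) (a : A),
      (∑ j, p i j * Wlim Q F K q p κ j (F i x a) (sbar - c - K i x a))
        ≤ ∑ j, p i j * Wlim Q F K q p κ j (F i x (pol x i c))
            (sbar - c - K i x (pol x i c))) :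
    ∀ (n : ℕ) (i : Fin M) (x : X) (c : ℝ), sbar - c < n * κ →
      reachCtrl Q F K q p pol sbar n i x c = Wlim Q F K q p κ i x (sbar - c) := by
  intro n
  induction n with
  | zero =>
    intro i x c hc
    have hc' : sbar - c < 0 := by simpa using hc
    rw [Wlim_neg Q F K q p hκ hK hq hc', reachCtrl_zero]
    refine if_neg ?_
    rintro ⟨hx, hqs⟩
    have : q i x ≤ sbar - c := by linarith
    exact absurd (le_trans (hq i x hx) this) (not_le.2 hc')
  | succ n ih =>
    intro i x c hc
    by_cases hx : x ∈ Q
    · rw [reachCtrl_succ, if_pos hx, Wlim_mem Q F K q p hx]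
      have h : c + q i x ≤ sbar ↔ q i x ≤ sbar - c := le_sub_iff_add_le'.symm
      exact if_congr h rfl rfl
    · rw [reachCtrl_succ, if_neg hx, Wlim_not_mem Q F K q p hκ hK hq hx]
      set a := pol x i c with ha
      have hterm : (∑ j, p i j * reachCtrl Q F K q p pol sbar n j (F i x a) (c + K i x a))
          = ∑ j, p i j * Wlim Q F K q p κ j (F i x a) (sbar - c - K i x a) := by
        refine Finset.sum_congr rfl fun j _ => ?_
        have hlt : sbar - (c + K i x a) < n * κ := by
          have := hK i x a
          push_cast at hc ⊢
          nlinarith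
        rw [ih j (F i x a) (c + K i x a) hlt,
          show sbar - (c + K i x a) = sbar - c - K i x a by ring]
      rw [hterm]
      refine le_antisymm ?_ ?_
      · exact Finset.le_sup'
          (fun b : A => ∑ j, p i j * Wlim Q F K q p κ j (F i x b) (sbar - c - K i x b))
          (Finset.mem_univ a)
      · exact Finset.sup'_le _ _ fun b _ => Hg x i c b

lemma polCDF_le_Wlim {κ : ℝ} (hκ : 0 < κ) (hK : ∀ i x a, κ ≤ K i x a)
    (hq : ∀ i, ∀ x ∈ Q, 0 ≤ q i x) (hp0 : ∀ i j, 0 ≤ p i j)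
    (pol : X → Fin M → ℝ → A) (i : Fin M) (x : X) (s : ℝ) :
    polCDF Q F K q p pol i x s ≤ Wlim Q F K q p κ i x s := by
  refine ciSup_le fun n => ?_
  have h1 := reachCtrl_le_Vopt Q F K q p hp0 pol s n i x 0
  rw [sub_zero] at h1
  exact h1.trans (Vopt_le_Wlim Q F K q p hκ hK hq hp0 n s i x)

lemma polCDF_eq_Wlim_of_greedy {κ : ℝ} (hκ : 0 < κ) (hK : ∀ i x a, κ ≤ K i x a)
    (hq : ∀ i, ∀ x ∈ Q, 0 ≤ q i x) (hp0 : ∀ i j, 0 ≤ p i j)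
    {sbar : ℝ} {pol : X → Fin M → ℝ → A}
    (Hg : ∀ (x : X) (i : Fin M) (c : ℝ) (a : A),
      (∑ j, p i j * Wlim Q F K q p κ j (F i x a) (sbar - c - K i x a))
        ≤ ∑ j, p i j * Wlim Q F K q p κ j (F i x (pol x i c))
            (sbar - c - K i x (pol x i c)))
    (i : Fin M) (x : X) :
    polCDF Q F K q p pol i x sbar = Wlim Q F K q p κ i x sbar := by
  refine le_antisymm (polCDF_le_Wlim Q F K q p hκ hK hq hp0 pol i x sbar) ?_
  have key := greedy_reach Q F K q p hκ hK hq hp0 Hg (nBig κ sbar) i x 0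
    (by rw [sub_zero]; exact lt_nBig_mul hκ sbar)
  rw [sub_zero] at key
  rw [← key]
  refine le_ciSup (f := fun n => reachCtrl Q F K q p pol sbar n i x 0) ?_ (nBig κ sbar)
  refine ⟨Wlim Q F K q p κ i x sbar, ?_⟩
  rintro _ ⟨n, rfl⟩
  have h1 := reachCtrl_le_Vopt Q F K q p hp0 pol sbar n i x 0
  rw [sub_zero] at h1
  exact h1.trans (Vopt_le_Wlim Q F K q p hκ hK hq hp0 n sbar i x)

lemma optCDF_eq_Wlim {κ : ℝ} (hκ : 0 < κ) (hK : ∀ i x a, κ ≤ K i x a)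
    (hq : ∀ i, ∀ x ∈ Q, 0 ≤ q i x) (hp0 : ∀ i j, 0 ≤ p i j)
    (i : Fin M) (x : X) (s : ℝ) :
    optCDF Q F K q p i x s = Wlim Q F K q p κ i x s := by
  refine le_antisymm
    (ciSup_le fun pol => polCDF_le_Wlim Q F K q p hκ hK hq hp0 pol i x s) ?_
  -- construct a greedy policy
  have hex : ∀ (x : X) (i : Fin M) (c : ℝ), ∃ a : A, ∀ b : A,
      (∑ j, p i j * Wlim Q F K q p κ j (F i x b) (s - c - K i x b))
        ≤ ∑ j, p i j * Wlim Q F K q p κ j (F i x a) (s - c - K i x a) := by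
    intro x i c
    obtain ⟨a, -, ha⟩ := Finset.exists_max_image Finset.univ
      (fun a : A => ∑ j, p i j * Wlim Q F K q p κ j (F i x a) (s - c - K i x a))
      Finset.univ_nonempty
    exact ⟨a, fun b => ha b (Finset.mem_univ b)⟩
  choose pol hpol using hex
  have := polCDF_eq_Wlim_of_greedy Q F K q p hκ hK hq hp0
    (pol := pol) (sbar := s) (fun x i c a => hpol x i c a) i x
  rw [← this]
  refine le_ciSup (f := fun pol' => polCDF Q F K q p pol' i x s) ?_ pol
  refine ⟨Wlim Q F K q p κ i x s, ?_⟩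
  rintro _ ⟨pol', rfl⟩
  exact polCDF_le_Wlim Q F K q p hκ hK hq hp0 pol' i x s

end Aux

/-- **Optimality and attainment for the threshold-aware value function:**
for any fixed threshold `s̄`, every policy's success probability is at most
`ŵ_i(x, s̄)`, and any policy that at each state `(x, i, accumulated cost c)`
chooses an action maximizing
`a ↦ Σ_j p_{ij} ŵ_j(F_i(x,a), s̄ − c − K_i(x,a))` achieves
`P(J_i^a(x) ≤ s̄) = ŵ_i(x, s̄)`. -/
theorem optCDF_attained {X A : Type*} [Fintype X] [Fintype A]
    [Nonempty A] {M : ℕ} (Q : Set X)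
    (F : Fin M → X → A → X) (K : Fin M → X → A → ℝ) (q : Fin M → X → ℝ)
    (p : Fin M → Fin M → ℝ) (κ : ℝ) (hκ : 0 < κ)
    (hK : ∀ i x a, κ ≤ K i x a) (hq : ∀ i, ∀ x ∈ Q, 0 ≤ q i x)
    (hp0 : ∀ i j, 0 ≤ p i j) (hp1 : ∀ i, ∑ j, p i j = 1)
    (sbar : ℝ) :
    (∀ (pol : X → Fin M → ℝ → A) (i : Fin M) (x : X),
        polCDF Q F K q p pol i x sbar ≤ optCDF Q F K q p i x sbar) ∧
    (∀ pol : X → Fin M → ℝ → A,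
      (∀ (x : X) (i : Fin M) (c : ℝ) (a : A),
        (∑ j, p i j * optCDF Q F K q p j (F i x a) (sbar - c - K i x a))
          ≤ ∑ j, p i j * optCDF Q F K q p j (F i x (pol x i c))
              (sbar - c - K i x (pol x i c))) →
      ∀ (i : Fin M) (x : X),
        polCDF Q F K q p pol i x sbar = optCDF Q F K q p i x sbar) := by
  have hW : ∀ (i : Fin M) (x : X) (s : ℝ),
      optCDF Q F K q p i x s = Wlim Q F K q p κ i x s :=
    fun i x s => optCDF_eq_Wlim Q F K q p hκ hK hq hp0 i x s
  constructor
  · intro pol i x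
    rw [hW i x sbar]
    exact polCDF_le_Wlim Q F K q p hκ hK hq hp0 pol i x sbar
  · intro pol Hg i x
    have Hg' : ∀ (x : X) (i : Fin M) (c : ℝ) (a : A),
        (∑ j, p i j * Wlim Q F K q p κ j (F i x a) (sbar - c - K i x a))
          ≤ ∑ j, p i j * Wlim Q F K q p κ j (F i x (pol x i c))
              (sbar - c - K i x (pol x i c)) := by
      intro x i c a
      have := Hg x i c a
      simpa only [hW] using this
    rw [hW i x sbar]
    exact polCDF_eq_Wlim_of_greedy Q F K q p hκ hK hq hp0 Hg' i x
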